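/- Let X ~ N(0,T), T > 0, σ > 0, f(x) = exp((μ-σ²/2)T + σx), and suppose μ, ρ ∈ ℝ. Then E[max(e^{ρT}, f(X))] > max(e^{ρT}, e^{μT}) unless Pr{f(X) > e^{ρT}} ∈ {0,1}; in particular, since 0 < Pr{f(X) > e^{ρT}} < 1 always holds, E[max(e^{ρT}, f(X))] > max(e^{ρT}, E[f(X)]) = max(e^{ρT}, e^{μT}). -/

import Mathlib

open MeasureTheory ProbabilityTheory Real

theorem insider_beats_honest (T σ ρ μ : ℝ) (hT : 0 < T) (hσ : 0 < σ)
    (f : ℝ → ℝ) (hf : ∀ x, f x = Real.exp ((μ - σ ^ 2 / 2) * T + σ * x)) :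
    0 < ((gaussianReal 0 T.toNNReal) {x | Real.exp (ρ * T) < f x}).toReal
    ∧ ((gaussianReal 0 T.toNNReal) {x | Real.exp (ρ * T) < f x}).toReal < 1
    ∧ (∫ x, f x ∂(gaussianReal 0 T.toNNReal)) = Real.exp (μ * T)
    ∧ (∫ x, max (Real.exp (ρ * T)) (f x) ∂(gaussianReal 0 T.toNNReal))
        > max (Real.exp (ρ * T)) (Real.exp (μ * T)) := by
  set v : NNReal := T.toNNReal with hv_def
  have hvT : (v : ℝ) = T := Real.coe_toNNReal T hT.le
  have hv : v ≠ 0 := by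
    simp only [hv_def, ne_eq, Real.toNNReal_eq_zero, not_le]
    exact hT
  set γ : Measure ℝ := gaussianReal 0 v with hγ_def
  haveI : IsProbabilityMeasure γ := by rw [hγ_def]; infer_instance
  set a : ℝ := Real.exp (ρ * T) with ha_def
  set c : ℝ := ((ρ - μ + σ ^ 2 / 2) * T) / σ with hc_def
  -- the set is Ioi c
  have hset : {x | a < f x} = Set.Ioi c := by
    ext x
    simp only [Set.mem_setOf_eq, Set.mem_Ioi, hf, ha_def, Real.exp_lt_exp, hc_def]
    rw [div_lt_iff₀ hσ]
    constructor <;> intro h <;> nlinarith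
  -- positivity of measures of Ioi and Iio
  have habs : volume ≪ γ := gaussianReal_absolutelyContinuous' 0 hv
  have hIoi : 0 < γ (Set.Ioi c) := by
    rcases eq_or_ne (γ (Set.Ioi c)) 0 with h | h
    · have := habs h
      rw [Real.volume_Ioi] at this
      simp at this
    · exact h.bot_lt
  have hIio : 0 < γ (Set.Iio c) := by
    rcases eq_or_ne (γ (Set.Iio c)) 0 with h | h
    · have := habs h
      rw [Real.volume_Iio] at this
      simp at this
    · exact h.bot_lt
  have hlt_top : γ (Set.Ioi c) < ⊤ := lt_of_le_of_lt prob_le_one ENNReal.one_lt_top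
  have h1 : 0 < (γ {x | a < f x}).toReal := by
    rw [hset]
    exact ENNReal.toReal_pos hIoi.ne' hlt_top.ne
  have h2 : (γ {x | a < f x}).toReal < 1 := by
    rw [hset]
    have hcompl : γ (Set.Ioi c) + γ (Set.Iic c) = 1 := by
      have := measure_add_measure_compl (μ := γ) (s := Set.Ioi c) measurableSet_Ioi
      rwa [Set.compl_Ioi, measure_univ] at this
    have hlt1 : γ (Set.Ioi c) < 1 := by
      have hIic : 0 < γ (Set.Iic c) :=
        lt_of_lt_of_le hIio (measure_mono Set.Iio_subset_Iic_self)
      have := ENNReal.lt_add_right hlt_top.ne hIic.ne'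
      rwa [hcompl] at this
    have := ENNReal.toReal_lt_toReal hlt_top.ne (by simp : (1 : ENNReal) ≠ ⊤) |>.mpr hlt1
    simpa using this
  -- key pdf identity
  have key : ∀ x : ℝ, gaussianPDFReal 0 v x * f x
      = Real.exp (μ * T) * gaussianPDFReal (σ * T) v x := by
    intro x
    have hx : -(x - 0) ^ 2 / (2 * T) + ((μ - σ ^ 2 / 2) * T + σ * x)
        = μ * T + -(x - σ * T) ^ 2 / (2 * T) := by
      field_simp
      ring
    simp only [gaussianPDFReal, hf, hvT]
    rw [mul_assoc ((√(2 * π * T))⁻¹), ← Real.exp_add, hx, Real.exp_add,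
      ← mul_assoc ((√(2 * π * T))⁻¹), mul_comm ((√(2 * π * T))⁻¹) (Real.exp (μ * T)),
      mul_assoc (Real.exp (μ * T)) ((√(2 * π * T))⁻¹)]
  -- express γ as withDensity
  have hmeas : Measurable (fun x => (gaussianPDFReal 0 v x).toNNReal) :=
    (measurable_gaussianPDFReal 0 v).real_toNNReal
  have hγw : γ = volume.withDensity (fun x => ((gaussianPDFReal 0 v x).toNNReal : ENNReal)) :=
    gaussianReal_of_var_ne_zero 0 hv
  have hsmul : ∀ (g : ℝ → ℝ) (x : ℝ),
      (gaussianPDFReal 0 v x).toNNReal • g x = gaussianPDFReal 0 v x * g x := by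
    intro g x
    rw [NNReal.smul_def, Real.coe_toNNReal _ (gaussianPDFReal_nonneg 0 v x)]
    rfl
  -- the integral of f
  have h3 : (∫ x, f x ∂γ) = Real.exp (μ * T) := by
    rw [hγw, integral_withDensity_eq_integral_smul hmeas]
    simp_rw [hsmul f, key]
    rw [integral_const_mul, integral_gaussianPDFReal_eq_one (σ * T) hv, mul_one]
  -- integrability
  have hInt_f : Integrable f γ := by
    rw [hγw, integrable_withDensity_iff_integrable_smul hmeas]
    have : (fun x => (gaussianPDFReal 0 v x).toNNReal • f x)
        = fun x => Real.exp (μ * T) * gaussianPDFReal (σ * T) v x := by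
      funext x
      rw [hsmul f, key]
    rw [this]
    exact (integrable_gaussianPDFReal (σ * T) v).const_mul _
  have hInt_g : Integrable (fun x => max a (f x)) γ := by
    have := (integrable_const a (μ := γ)).sup hInt_f
    exact this
  -- strict inequalities
  have e1 : a < ∫ x, max a (f x) ∂γ := by
    have hpos : 0 < ∫ x, (max a (f x) - a) ∂γ := by
      rw [integral_pos_iff_support_of_nonneg
        (fun x => sub_nonneg.2 (le_max_left a (f x)))
        (hInt_g.sub (integrable_const a))]
      refine lt_of_lt_of_le hIoi (measure_mono ?_)
      intro x hx
      have hax : a < f x := by rw [← hset] at hx; exact hx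
      simp only [Function.mem_support, ne_eq]
      rw [max_eq_right hax.le]
      intro h
      exact absurd (sub_eq_zero.mp h) hax.ne'
    rw [integral_sub hInt_g (integrable_const a), integral_const] at hpos
    simp only [measure_univ, probReal_univ, ENNReal.toReal_one, one_smul] at hpos
    linarith
  have e2 : Real.exp (μ * T) < ∫ x, max a (f x) ∂γ := by
    have hpos : 0 < ∫ x, (max a (f x) - f x) ∂γ := by
      rw [integral_pos_iff_support_of_nonneg
        (fun x => sub_nonneg.2 (le_max_right a (f x)))
        (hInt_g.sub hInt_f)]
      refine lt_of_lt_of_le hIio (measure_mono ?_)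
      intro x hx
      have hax : f x < a := by
        rw [Set.mem_Iio, hc_def, lt_div_iff₀ hσ] at hx
        rw [hf, ha_def, Real.exp_lt_exp]
        nlinarith [hx]
      simp only [Function.mem_support, ne_eq]
      rw [max_eq_left hax.le]
      intro h
      exact absurd (sub_eq_zero.mp h) hax.ne'
    rw [integral_sub hInt_g hInt_f, h3] at hpos
    linarith
  exact ⟨h1, h2, h3, max_lt e1 e2⟩
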